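/- For all natural numbers n ≥ 1, ∑_{k=0}^{2n} (-1)^k · C(2n, k) · C(2k, k) / 2^k = C(2n, n) / 4^n. -/

import Mathlib

open Finset

private def tt (n k : ℕ) : ℚ :=
  (-1 : ℚ) ^ k * (Nat.choose (2 * n) k : ℚ) * (Nat.choose (2 * k) k : ℚ) / 2 ^ k

private def gg (n k : ℕ) : ℚ :=
  (-1 : ℚ) ^ k * (2 * k + 1) * (Nat.choose (2 * n + 1) k : ℚ) * (Nat.choose (2 * k) k : ℚ) / 2 ^ k

private def GG (n : ℕ) : ℕ → ℚ
  | 0 => 0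
  | (j + 1) => gg n j

private lemma hterm (n k : ℕ) :
    (2 * n + 2) * tt (n + 1) k - (2 * n + 1) * tt n k = GG n (k + 1) - GG n k := by
  cases k with
  | zero =>
    simp [tt, gg, GG]
    ring
  | succ j =>
    show (2 * n + 2) * tt (n + 1) (j + 1) - (2 * n + 1) * tt n (j + 1) = gg n (j + 1) - gg n j
    have h1 : Nat.choose (2 * n + 2) (j + 1)
        = Nat.choose (2 * n + 1) j + Nat.choose (2 * n + 1) (j + 1) := by
      rw [show 2 * n + 2 = (2 * n + 1) + 1 by ring]
      exact Nat.choose_succ_succ _ _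
    have h2 : Nat.choose (2 * n + 1) (j + 1)
        = Nat.choose (2 * n) j + Nat.choose (2 * n) (j + 1) := Nat.choose_succ_succ _ _
    have h3 : (2 * n + 1) * Nat.choose (2 * n) j
        = Nat.choose (2 * n + 1) (j + 1) * (j + 1) := by
      simpa using Nat.add_one_mul_choose_eq (2 * n) j
    have h4 : (2 * n + 2) * Nat.choose (2 * n + 1) j
        = Nat.choose (2 * n + 2) (j + 1) * (j + 1) := by
      rw [show 2 * n + 2 = (2 * n + 1) + 1 by ring]
      simpa using Nat.add_one_mul_choose_eq (2 * n + 1) j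
    have h5 : (j + 1) * Nat.choose (2 * (j + 1)) (j + 1)
        = 2 * (2 * j + 1) * Nat.choose (2 * j) j := by
      simpa [Nat.centralBinom] using Nat.succ_mul_centralBinom_succ j
    have q1 : (Nat.choose (2 * n + 2) (j + 1) : ℚ)
        = Nat.choose (2 * n + 1) j + Nat.choose (2 * n + 1) (j + 1) := by exact_mod_cast h1
    have q2 : (Nat.choose (2 * n + 1) (j + 1) : ℚ)
        = Nat.choose (2 * n) j + Nat.choose (2 * n) (j + 1) := by exact_mod_cast h2
    have q3 : ((2 * n + 1 : ℕ) : ℚ) * Nat.choose (2 * n) j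
        = Nat.choose (2 * n + 1) (j + 1) * ((j : ℚ) + 1) := by exact_mod_cast h3
    have q4 : ((2 * n + 2 : ℕ) : ℚ) * Nat.choose (2 * n + 1) j
        = Nat.choose (2 * n + 2) (j + 1) * ((j : ℚ) + 1) := by exact_mod_cast h4
    have q5 : ((j : ℚ) + 1) * Nat.choose (2 * (j + 1)) (j + 1)
        = 2 * (2 * (j : ℚ) + 1) * Nat.choose (2 * j) j := by exact_mod_cast h5
    simp only [tt, gg]
    rw [show 2 * (n + 1) = 2 * n + 2 by ring]
    push_cast at q1 q2 q3 q4 q5 ⊢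
    have hpow : (2 : ℚ) ^ (j + 1) ≠ 0 := by positivity
    field_simp
    linear_combination
      ((-1 : ℚ) ^ (j + 1) * 2 ^ j) *
          ((Nat.choose (2 * (j + 1)) (j + 1) : ℚ) *
            ((2 * (n : ℚ) + (j : ℚ) + 3) * q1 + (2 * n + 1) * q2 + q3 + q4)
          + (Nat.choose (2 * n + 1) j : ℚ) * q5)

private lemma recc (n : ℕ) :
    (2 * n + 2) * (∑ k ∈ Finset.range (2 * (n + 1) + 1), tt (n + 1) k)
      = (2 * n + 1) * (∑ k ∈ Finset.range (2 * n + 1), tt n k) := by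
  have h1 : ∑ k ∈ Finset.range (2 * n + 3),
      ((2 * n + 2) * tt (n + 1) k - (2 * n + 1) * tt n k) = 0 := by
    calc ∑ k ∈ Finset.range (2 * n + 3),
          ((2 * n + 2) * tt (n + 1) k - (2 * n + 1) * tt n k)
        = ∑ k ∈ Finset.range (2 * n + 3), (GG n (k + 1) - GG n k) :=
          Finset.sum_congr rfl fun k _ => hterm n k
      _ = GG n (2 * n + 3) - GG n 0 := Finset.sum_range_sub (GG n) (2 * n + 3)
      _ = 0 := by
          have e : GG n (2 * n + 3) = gg n (2 * n + 2) := rfl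
          rw [e]
          simp [GG, gg, Nat.choose_eq_zero_of_lt (by omega : 2 * n + 1 < 2 * n + 2)]
  rw [Finset.sum_sub_distrib, ← Finset.mul_sum, ← Finset.mul_sum, sub_eq_zero] at h1
  have h2 : ∑ k ∈ Finset.range (2 * n + 3), tt n k
      = ∑ k ∈ Finset.range (2 * n + 1), tt n k := by
    refine (Finset.sum_subset (by intro x hx; simp at hx ⊢; omega) ?_).symm
    intro k hk hks
    simp only [Finset.mem_range] at hk hks
    have : 2 * n < k := by omega
    simp [tt, Nat.choose_eq_zero_of_lt this]
  rw [h2] at h1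
  rw [show 2 * (n + 1) + 1 = 2 * n + 3 by ring]
  exact h1

private lemma main (n : ℕ) :
    (∑ k ∈ Finset.range (2 * n + 1), tt n k) * 4 ^ n = (Nat.choose (2 * n) n : ℚ) := by
  induction n with
  | zero => simp [tt]
  | succ n ih =>
    have hrec := recc n
    have hcb : ((n : ℚ) + 1) * (Nat.choose (2 * (n + 1)) (n + 1) : ℚ)
        = 2 * (2 * (n : ℚ) + 1) * (Nat.choose (2 * n) n : ℚ) := by
      exact_mod_cast congrArg (Nat.cast : ℕ → ℚ) (Nat.succ_mul_centralBinom_succ n)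
    have hne : ((n : ℚ) + 1) ≠ 0 := by positivity
    apply mul_left_cancel₀ hne
    rw [show 2 * (n + 1) = 2 * n + 2 by ring] at hcb ⊢
    rw [show 2 * (n + 1) + 1 = 2 * n + 2 + 1 by ring] at hrec
    push_cast at hrec ⊢
    linear_combination (2 * (4 : ℚ) ^ n) * hrec + (2 * (2 * (n : ℚ) + 1)) * ih - hcb

theorem stmt9 (n : ℕ) (hn : 1 ≤ n) :
    ∑ k ∈ Finset.range (2 * n + 1),
        (-1 : ℚ) ^ k * (Nat.choose (2 * n) k : ℚ) * (Nat.choose (2 * k) k : ℚ) / 2 ^ k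
      = (Nat.choose (2 * n) n : ℚ) / 4 ^ n := by
  rw [eq_div_iff (by positivity : (4 : ℚ) ^ n ≠ 0)]
  exact main n
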